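/- Let (x₁,x₂) and (y₁,y₂) be commuting q-Weyl pairs in A with x₁y₂ + x₂ invertible. Then x•y and x*y are again q-Weyl pairs, i.e. all four components (x•y)₁, (x•y)₂, (x*y)₁, (x*y)₂ are invertible, (x•y)₁(x•y)₂ = q²(x•y)₂(x•y)₁, and (x*y)₁(x*y)₂ = q²(x*y)₂(x*y)₁; moreover the two pairs commute componentwise: (x•y)_i (x*y)_j = (x*y)_j (x•y)_i for all i, j ∈ {1,2}. Hence the quantum decorated flip defines an algebra homomorphism. -/

import Mathlib

/-- The quantum "dot" operation: `x • y := (x₁y₁, x₁y₂ + x₂)`. -/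
def Qdot {A : Type*} [Ring A] (x y : A × A) : A × A :=
  (x.1 * y.1, x.1 * y.2 + x.2)

/-- The quantum "star" operation:
`x * y := (y₁x₂(x₁y₂+x₂)⁻¹, y₂(x₁y₂+x₂)⁻¹)`, the inverse taken via `Ring.inverse`. -/
noncomputable def Qstar {A : Type*} [Ring A] (x y : A × A) : A × A :=
  (y.1 * x.2 * Ring.inverse (x.1 * y.2 + x.2), y.2 * Ring.inverse (x.1 * y.2 + x.2))

/-- A `q`-Weyl pair: both components are invertible and `a₁a₂ = q²a₂a₁`. -/
def IsWeylPair {A : Type*} [Ring A] (q : A) (a : A × A) : Prop :=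
  IsUnit a.1 ∧ IsUnit a.2 ∧ a.1 * a.2 = q ^ 2 * (a.2 * a.1)

/-- Two pairs commute componentwise. -/
def PairCommute {A : Type*} [Ring A] (x y : A × A) : Prop :=
  ∀ i j : Fin 2, Commute (if i = 0 then x.1 else x.2) (if j = 0 then y.1 else y.2)

/-- If `x`, `y` are commuting `q`-Weyl pairs (with `q` a central invertible element) and
`x₁y₂ + x₂` is invertible, then `x•y` and `x*y` are again `q`-Weyl pairs and they commute
componentwise; hence the quantum decorated flip defines an algebra homomorphism. -/
private lemma swap_assoc' {A : Type*} [Ring A] {a c : A} (h : a * c = c * a) (t : A) :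
    a * (c * t) = c * (a * t) := by rw [← mul_assoc, h, mul_assoc]

private lemma qswap_assoc' {A : Type*} [Ring A] {p a b : A} (h : a * b = p * (b * a)) (t : A) :
    a * (b * t) = p * (b * (a * t)) := by rw [← mul_assoc, h, mul_assoc, mul_assoc]

private lemma comm_inv {A : Type*} [Ring A] {z D : A} (hD : IsUnit D) (h : z * D = D * z) :
    z * Ring.inverse D = Ring.inverse D * z := by
  have h1 := Ring.mul_inverse_cancel D hD
  have h2 := Ring.inverse_mul_cancel D hD
  have e : z * Ring.inverse D = (Ring.inverse D * D) * (z * Ring.inverse D) := by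
    rw [h2, one_mul]
  rw [e, mul_assoc, ← mul_assoc D z, ← h, mul_assoc, h1, mul_one]

theorem quantum_flip_preserves_weyl_pairs {A : Type*} [Ring A] (q : A)
    (hq : IsUnit q) (hqc : ∀ a : A, Commute q a)
    (x y : A × A) (hx : IsWeylPair q x) (hy : IsWeylPair q y)
    (hxy : PairCommute x y) (hD : IsUnit (x.1 * y.2 + x.2)) :
    IsWeylPair q (Qdot x y) ∧ IsWeylPair q (Qstar x y) ∧
    PairCommute (Qdot x y) (Qstar x y) := by
  obtain ⟨a, b⟩ := x
  obtain ⟨c, d⟩ := y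
  obtain ⟨hua, hub, hab⟩ := hx
  obtain ⟨huc, hud, hcd⟩ := hy
  simp only at hua hub huc hud hab hcd hD ⊢
  set p := q ^ 2 with hpdef
  have hp : ∀ r : A, p * r = r * p := fun r => ((hqc r).pow_left 2).eq
  have hac : a * c = c * a := by simpa using (hxy 0 0).eq
  have had : a * d = d * a := by simpa using (hxy 0 1).eq
  have hbc' : b * c = c * b := by simpa using (hxy 1 0).eq
  have hbd : b * d = d * b := by simpa using (hxy 1 1).eq
  have hcb : c * b = b * c := hbc'.symm
  have hap : a * p = p * a := (hp a).symm
  have hbp : b * p = p * b := (hp b).symm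
  have hcp : c * p = p * c := (hp c).symm
  have hdp : d * p = p * d := (hp d).symm
  -- pure-letter identities (u := a*c, v := c*b, D := a*d+b)
  have I1 : (a * c) * (a * d + b) = p * ((a * d + b) * (a * c)) := by
    simp only [mul_add, add_mul, mul_assoc, hab, qswap_assoc' hab, hcd, qswap_assoc' hcd,
      hac, swap_assoc' hac, had, swap_assoc' had, hcb, swap_assoc' hcb, hbd, swap_assoc' hbd,
      hap, swap_assoc' hap, hbp, swap_assoc' hbp, hcp, swap_assoc' hcp, hdp, swap_assoc' hdp]
  have I2 : d * (a * d + b) = (a * d + b) * d := by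
    simp only [mul_add, add_mul, mul_assoc, hab, qswap_assoc' hab, hcd, qswap_assoc' hcd,
      hac, swap_assoc' hac, had, swap_assoc' had, hcb, swap_assoc' hcb, hbd, swap_assoc' hbd,
      hap, swap_assoc' hap, hbp, swap_assoc' hbp, hcp, swap_assoc' hcp, hdp, swap_assoc' hdp]
  have I3 : (c * b) * (a * d + b) = (a * d + b) * (c * b) := by
    simp only [mul_add, add_mul, mul_assoc, hab, qswap_assoc' hab, hcd, qswap_assoc' hcd,
      hac, swap_assoc' hac, had, swap_assoc' had, hcb, swap_assoc' hcb, hbd, swap_assoc' hbd,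
      hap, swap_assoc' hap, hbp, swap_assoc' hbp, hcp, swap_assoc' hcp, hdp, swap_assoc' hdp]
  have I4 : (c * b) * d = p * (d * (c * b)) := by
    simp only [mul_add, add_mul, mul_assoc, hab, qswap_assoc' hab, hcd, qswap_assoc' hcd,
      hac, swap_assoc' hac, had, swap_assoc' had, hcb, swap_assoc' hcb, hbd, swap_assoc' hbd,
      hap, swap_assoc' hap, hbp, swap_assoc' hbp, hcp, swap_assoc' hcp, hdp, swap_assoc' hdp]
  have I6 : (a * c) * (c * b) = p * ((c * b) * (a * c)) := by
    simp only [mul_add, add_mul, mul_assoc, hab, qswap_assoc' hab, hcd, qswap_assoc' hcd,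
      hac, swap_assoc' hac, had, swap_assoc' had, hcb, swap_assoc' hcb, hbd, swap_assoc' hbd,
      hap, swap_assoc' hap, hbp, swap_assoc' hbp, hcp, swap_assoc' hcp, hdp, swap_assoc' hdp]
  have I7 : (a * c) * d = p * (d * (a * c)) := by
    simp only [mul_add, add_mul, mul_assoc, hab, qswap_assoc' hab, hcd, qswap_assoc' hcd,
      hac, swap_assoc' hac, had, swap_assoc' had, hcb, swap_assoc' hcb, hbd, swap_assoc' hbd,
      hap, swap_assoc' hap, hbp, swap_assoc' hbp, hcp, swap_assoc' hcp, hdp, swap_assoc' hdp]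
  set D := a * d + b with hDdef
  set E := Ring.inverse D with hEdef
  have hDE : D * E = 1 := Ring.mul_inverse_cancel D hD
  have hED : E * D = 1 := Ring.inverse_mul_cancel D hD
  have hdE : d * E = E * d := comm_inv hD I2
  have hvE : (c * b) * E = E * (c * b) := comm_inv hD I3
  have hEu : E * (a * c) = p * ((a * c) * E) := by
    have e : E * (a * c) = E * ((a * c) * (D * E)) := by rw [hDE, mul_one]
    rw [e, ← mul_assoc (a*c) D E, I1, ← mul_assoc, ← mul_assoc, ← hp E, mul_assoc p E,
      ← mul_assoc E D, hED, one_mul, mul_assoc]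
  have hE : IsUnit E := by
    rw [hEdef]; exact isUnit_ringInverse.mpr hD
  refine ⟨⟨hua.mul huc, hD, I1⟩, ⟨(huc.mul hub).mul hE, hud.mul hE, ?_⟩, ?_⟩
  · -- star Weyl relation : ((c*b)*E) * (d*E) = p * ((d*E) * ((c*b)*E))
    have e1 : E * (d * E) = d * (E * E) := by rw [← mul_assoc, ← hdE, mul_assoc]
    have e2 : E * ((c * b) * E) = (c * b) * (E * E) := by rw [← mul_assoc, ← hvE, mul_assoc]
    calc (c * b * E) * (d * E) = (c * b) * (d * (E * E)) := by rw [mul_assoc, e1]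
      _ = ((c * b) * d) * (E * E) := by simp only [mul_assoc]
      _ = p * (d * ((c * b) * (E * E))) := by rw [I4, mul_assoc, mul_assoc]
      _ = p * (d * (E * ((c * b) * E))) := by rw [e2]
      _ = p * ((d * E) * (c * b * E)) := by rw [← mul_assoc d E]
  · intro i j
    fin_cases i <;> fin_cases j <;>
      simp only [Fin.isValue, Fin.zero_eta, Fin.mk_one, if_true, reduceIte, Qdot, Qstar]
    · -- (a*c) vs (c*b)*E
      show (a * c) * (c * b * E) = (c * b * E) * (a * c)
      calc (a * c) * (c * b * E) = ((a * c) * (c * b)) * E := by simp only [mul_assoc]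
        _ = p * (((c * b) * (a * c)) * E) := by rw [I6, mul_assoc]
        _ = p * ((c * b) * ((a * c) * E)) := by rw [mul_assoc]
        _ = (c * b) * (p * ((a * c) * E)) := by rw [← mul_assoc, hp (c*b), mul_assoc]
        _ = (c * b) * (E * (a * c)) := by rw [hEu]
        _ = (c * b * E) * (a * c) := by simp only [mul_assoc]
    · -- (a*c) vs d*E
      show (a * c) * (d * E) = (d * E) * (a * c)
      calc (a * c) * (d * E) = ((a * c) * d) * E := by simp only [mul_assoc]
        _ = p * ((d * (a * c)) * E) := by rw [I7, mul_assoc]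
        _ = p * (d * ((a * c) * E)) := by rw [mul_assoc]
        _ = d * (p * ((a * c) * E)) := by rw [← mul_assoc, hp d, mul_assoc]
        _ = d * (E * (a * c)) := by rw [hEu]
        _ = (d * E) * (a * c) := by rw [mul_assoc]
    · -- D vs (c*b)*E
      show D * (c * b * E) = (c * b * E) * D
      calc D * (c * b * E) = (D * (c * b)) * E := by simp only [mul_assoc]
        _ = ((c * b) * D) * E := by rw [I3]
        _ = (c * b) * (D * E) := by rw [mul_assoc]
        _ = (c * b) * (E * D) := by rw [hDE, hED]
        _ = (c * b * E) * D := by simp only [mul_assoc]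
    · -- D vs d*E
      show D * (d * E) = (d * E) * D
      calc D * (d * E) = (D * d) * E := by rw [mul_assoc]
        _ = (d * D) * E := by rw [I2]
        _ = d * (D * E) := by rw [mul_assoc]
        _ = d * (E * D) := by rw [hDE, hED]
        _ = (d * E) * D := by rw [mul_assoc]
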